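/- Let X be a locally compact non-compact Hausdorff space with one-point compactification αX radial at ⋆, and let φX be a Hausdorff compactification of X with finite remainder. Then φX is radial at every point of φX \ X. -/

import Mathlib

open Filter Topology Set

universe u v

/-- `x` has a neighbourhood base in the subspace `S` well-ordered by reverse inclusion. -/
def HasWONhdsBase {X : Type u} [TopologicalSpace X] (x : X) (S : Set X) : Prop :=
  ∃ (o : Ordinal.{u}) (B : ↥(Set.Iio o) → Set X),
    (∀ i, B i ⊆ S) ∧ (∀ i j, i ≤ j → B j ⊆ B i) ∧
    (𝓝[S] x).HasBasis (fun _ => True) B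

/-- `X` is radial at `x`. -/
def RadialAt (X : Type u) [TopologicalSpace X] (x : X) : Prop :=
  ∀ A : Set X, x ∈ closure A →
    ∃ (o : Ordinal.{u}) (f : ↥(Set.Iio o) → X), o ≠ 0 ∧
      (∀ i, f i ∈ A) ∧ Filter.Tendsto f Filter.atTop (𝓝 x)
theorem stmt19 {X : Type u} [TopologicalSpace X] [T2Space X] [LocallyCompactSpace X]
    [NoncompactSpace X]
    (hrad : RadialAt (OnePoint X) OnePoint.infty)
    {γ : Type v} [TopologicalSpace γ] [CompactSpace γ] [T2Space γ]
    (e : X → γ) (he : Topology.IsEmbedding e) (hd : DenseRange e)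
    (hfin : ((Set.range e)ᶜ).Finite) :
    ∀ z ∈ (Set.range e)ᶜ, RadialAt γ z := by
  intro z hz A hA
  by_cases hzA : z ∈ A
  · exact ⟨1, fun _ => z, one_ne_zero, fun _ => hzA, tendsto_const_nhds⟩
  -- a closed neighbourhood of `z` meeting the remainder only in `z`
  have hFc : IsClosed ((Set.range e)ᶜ \ {z}) := (hfin.subset diff_subset).isClosed
  have hzne : ((Set.range e)ᶜ \ {z})ᶜ ∈ 𝓝 z :=
    hFc.isOpen_compl.mem_nhds (by simp)
  obtain ⟨t, htz, htc, hts⟩ := exists_mem_nhds_isClosed_subset hzne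
  set A₀ : Set γ := A ∩ interior t with hA₀def
  have hA₀A : A₀ ⊆ A := inter_subset_left
  have hA₀t : A₀ ⊆ t := fun x hx => interior_subset hx.2
  have hzA₀ : z ∈ closure A₀ := by
    rw [mem_closure_iff_nhds] at hA ⊢
    intro N hN
    obtain ⟨x, hx1, hx2⟩ := hA (N ∩ interior t)
      (inter_mem hN (isOpen_interior.mem_nhds (mem_interior_iff_mem_nhds.2 htz)))
    exact ⟨x, hx1.1, hx2, hx1.2⟩
  have htF : ∀ y ∈ t, y ∉ Set.range e → y = z := by
    intro y hy hy'
    by_contra h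
    exact (hts hy) ⟨hy', h⟩
  have hA₀range : A₀ ⊆ Set.range e := by
    intro x hx
    by_contra h
    exact hzA ((htF x (hA₀t hx) h) ▸ hA₀A hx)
  set B : Set X := e ⁻¹' A₀ with hBdef
  have himg : e '' B = A₀ := by
    rw [hBdef, image_preimage_eq_inter_range]
    exact inter_eq_left.2 hA₀range
  -- `∞` lies in the closure of `B` in the one-point compactification
  have hinf : (OnePoint.infty : OnePoint X) ∈
      closure ((fun x : X => (x : OnePoint X)) '' B) := by
    rw [mem_closure_iff_nhds_basis OnePoint.hasBasis_nhds_infty]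
    rintro K ⟨hKcl, hKcp⟩
    by_cases hBK : B ⊆ K
    · exfalso
      have hcp : IsCompact (e '' K) := hKcp.image he.continuous
      have hsub : A₀ ⊆ e '' K := himg ▸ image_mono (f := e) hBK
      have : z ∈ e '' K :=
        (hcp.isClosed.closure_subset_iff.2 hsub) hzA₀
      exact hz (image_subset_range e K this)
    · obtain ⟨x, hxB, hxK⟩ := not_subset.1 hBK
      exact ⟨(x : OnePoint X), mem_image_of_mem _ hxB, Or.inl (mem_image_of_mem _ hxK)⟩
  obtain ⟨o, f, ho, hfmem, hflim⟩ := hrad _ hinf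
  simp only [mem_image] at hfmem
  choose x hxB hxe using hfmem
  -- convergence of the net in `γ` (indexed by `Iio o`)
  have hmain : Filter.Tendsto (fun j : ↥(Set.Iio o) => e (x j)) Filter.atTop (𝓝 z) := by
    rw [tendsto_nhds]
    intro V hVopen hzV
    set C : Set γ := t ∩ Vᶜ with hCdef
    have hCcl : IsClosed C := htc.inter hVopen.isClosed_compl
    have hCcp : IsCompact C := hCcl.isCompact
    have hCrange : C ⊆ Set.range e := by
      intro y hy
      by_contra h
      exact hy.2 ((htF y hy.1 h) ▸ hzV)
    set K : Set X := e ⁻¹' C with hKdef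
    have hKcp : IsCompact K := by
      rw [he.isCompact_iff, hKdef, image_preimage_eq_inter_range,
        inter_eq_left.2 hCrange]
      exact hCcp
    have hKcl : IsClosed K := hKcp.isClosed
    have hN : ((fun x : X => (x : OnePoint X)) '' Kᶜ ∪ {OnePoint.infty}) ∈
        𝓝 (OnePoint.infty : OnePoint X) :=
      OnePoint.hasBasis_nhds_infty.mem_of_mem ⟨hKcl, hKcp⟩
    filter_upwards [hflim hN] with j hj
    have hxA₀ : e (x j) ∈ A₀ := hxB j
    have hxK : x j ∉ K := by
      rcases hj with hj | hj
      · obtain ⟨a, haK, hae⟩ := hj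
        rw [← hxe j] at hae
        rwa [OnePoint.coe_eq_coe.1 hae] at haK
      · exact absurd ((hxe j).trans (mem_singleton_iff.1 hj))
          (OnePoint.coe_ne_infty _)
    by_contra hV
    exact hxK ⟨hA₀t hxA₀, hV⟩
  -- reindex the net by a well-order living in universe `v`
  set g : ↥(Set.Iio o) → γ := fun j => e (x j) with hgdef
  have hgA₀ : ∀ j, g j ∈ A₀ := fun j => hxB j
  have hzA₀' : z ∉ A₀ := fun h => hzA (hA₀A h)
  haveI hIne : Nonempty ↥(Set.Iio o) :=
    ⟨⟨0, mem_Iio.2 (pos_iff_ne_zero.2 ho)⟩⟩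
  -- no value of the net occurs cofinally
  have hbdd : ∀ y : γ, ∃ i : ↥(Set.Iio o), ∀ j ≥ i, g j ≠ y := by
    intro y
    by_contra h
    push_neg at h
    have hyz : y = z := by
      by_contra hne
      obtain ⟨Vy, Vz, hVyo, hVzo, hyV, hzV, hdisj⟩ := t2_separation hne
      obtain ⟨i0, hi0⟩ := eventually_atTop.1 (hmain (hVzo.mem_nhds hzV))
      obtain ⟨j, hji, hjy⟩ := h i0
      have : y ∈ Vz := hjy ▸ hi0 j hji
      exact disjoint_left.1 hdisj hyV this
    obtain ⟨j, -, hj⟩ := h (Classical.arbitrary _)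
    have : z ∈ A₀ := by rw [← hyz, ← hj]; exact hgA₀ j
    exact hzA₀' this
  choose l hl using hbdd
  have hlt_l : ∀ i : ↥(Set.Iio o), i < l (g i) := by
    intro i
    by_contra h
    push_neg at h
    exact hl (g i) i h rfl
  -- well-order on a subtype of `γ` given by the levels of `l`
  let γ' : Type v := ↥(Set.range (Set.rangeSplitting l))
  let r : γ' → γ' → Prop := fun a b => l a.1 < l b.1
  have hlinj : ∀ a b : γ', l a.1 = l b.1 → a = b := by
    rintro ⟨a, ⟨ia, rfl⟩⟩ ⟨b, ⟨ib, rfl⟩⟩ hab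
    have ha := Set.apply_rangeSplitting l ia
    have hb := Set.apply_rangeSplitting l ib
    have h1 : (ia : ↥(Set.Iio o)) = (ib : ↥(Set.Iio o)) := by
      rw [← ha, ← hb]; exact hab
    have h2 : ia = ib := Subtype.ext h1
    simp [h2]
  let emb : r ↪r ((· < ·) : ↥(Set.Iio o) → ↥(Set.Iio o) → Prop) :=
    ⟨⟨fun a => l a.1, fun a b hab => hlinj a b hab⟩, Iff.rfl⟩
  haveI : IsWellOrder γ' r := emb.isWellOrder
  -- the reindexing map
  let M : ↥(Set.Iio (Ordinal.type r)) → ↥(Set.Iio o) :=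
    fun α => l (Ordinal.enum r ⟨α.1, α.2⟩).1
  haveI hne' : Nonempty γ' :=
    ⟨⟨Set.rangeSplitting l ⟨l z, Set.mem_range_self z⟩, Set.mem_range_self _⟩⟩
  have hM : Filter.Tendsto M Filter.atTop Filter.atTop := by
    haveI : Nonempty ↥(Set.Iio (Ordinal.type r)) := by
      obtain ⟨y⟩ := hne'
      exact ⟨⟨Ordinal.typein r y, Ordinal.typein_lt_type r y⟩⟩
    rw [tendsto_atTop_atTop]
    intro b
    set y0 : γ' := ⟨Set.rangeSplitting l ⟨l (g b), Set.mem_range_self _⟩,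
      Set.mem_range_self _⟩ with hy0def
    have hly0 : l y0.1 = l (g b) := Set.apply_rangeSplitting l _
    refine ⟨⟨Ordinal.typein r y0, Ordinal.typein_lt_type r y0⟩, fun a ha => ?_⟩
    have henum : Ordinal.enum r ⟨(⟨Ordinal.typein r y0, Ordinal.typein_lt_type r y0⟩ :
        ↥(Set.Iio (Ordinal.type r))).1, (⟨Ordinal.typein r y0,
        Ordinal.typein_lt_type r y0⟩ : ↥(Set.Iio (Ordinal.type r))).2⟩ = y0 :=
      Ordinal.enum_typein r y0
    have hle : ¬ r (Ordinal.enum r ⟨a.1, a.2⟩)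
        (Ordinal.enum r ⟨(⟨Ordinal.typein r y0, Ordinal.typein_lt_type r y0⟩ :
        ↥(Set.Iio (Ordinal.type r))).1, _⟩) :=
      (Ordinal.enum_le_enum r).2 ha
    rw [henum] at hle
    have hge : l y0.1 ≤ l (Ordinal.enum r ⟨a.1, a.2⟩).1 := not_lt.1 hle
    calc b ≤ l (g b) := (hlt_l b).le
    _ = l y0.1 := hly0.symm
    _ ≤ M a := hge
  refine ⟨Ordinal.type r, fun α => g (M α), ?_, fun α => hA₀A (hgA₀ _), hmain.comp hM⟩
  intro h0
  rw [Ordinal.type_eq_zero_iff_isEmpty] at h0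
  exact h0.false (Classical.arbitrary γ')
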